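/- Let a_1,...,a_n be pairwise coprime positive integers and b_1,...,b_n integers with Σ_i b_i·(a_1···a_n)/a_i = 1. Then for each i, the Dedekind–Rademacher sums satisfy s(b_i, a_i; 1/2, 0) = s(a_1···a_n/a_i, a_i; 1/2, 1/2), where all a_i are assumed odd; the identity follows from the substitution ν = b_i·μ + (a_i - 1)/2 mod a_i. -/

import Mathlib

open Finset Real

open Classical in
/-- The sawtooth function: 0 on integers, fractional part minus 1/2 otherwise. -/
noncomputable def saw (x : ℝ) : ℝ :=
  if ∃ n : ℤ, x = n then 0 else Int.fract x - 1/2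

/-- The Dedekind sum s(q,p). -/
noncomputable def dedekindSum (q : ℤ) (p : ℕ) : ℝ :=
  ∑ μ ∈ Finset.range p, saw ((μ : ℝ) / p) * saw ((q : ℝ) * μ / p)

/-- The Dedekind–Rademacher sum s(q,p;x,y). -/
noncomputable def drSum (q : ℤ) (p : ℕ) (x y : ℝ) : ℝ :=
  ∑ μ ∈ Finset.range p, saw (((μ : ℝ) + y) / p) * saw ((q : ℝ) * ((μ : ℝ) + y) / p + x)

open Classical in
lemma saw_add_int (y : ℝ) (k : ℤ) : saw (y + k) = saw y := by
  unfold saw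
  have h : (∃ n : ℤ, y + (k : ℝ) = n) ↔ ∃ n : ℤ, y = n := by
    constructor
    · rintro ⟨n, hn⟩; exact ⟨n - k, by push_cast; linarith⟩
    · rintro ⟨n, hn⟩; exact ⟨n + k, by push_cast; linarith⟩
  rw [Int.fract_add_intCast]
  exact if_congr h rfl rfl

lemma saw_congr {x y : ℝ} (k : ℤ) (h : x = y + k) : saw x = saw y := by
  rw [h, saw_add_int]

lemma sum_range_eq_sum_zmod (p : ℕ) [NeZero p] (f : ℕ → ℝ) :
    ∑ μ ∈ Finset.range p, f μ = ∑ x : ZMod p, f x.val := by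
  refine Finset.sum_nbij' (fun μ => (μ : ZMod p)) (fun x => x.val) ?_ ?_ ?_ ?_ ?_
  · intro a _; exact Finset.mem_univ _
  · intro x _; exact Finset.mem_range.mpr (ZMod.val_lt x)
  · intro a ha; exact ZMod.val_cast_of_lt (Finset.mem_range.mp ha)
  · intro x _; exact ZMod.natCast_zmod_val x
  · intro a ha; rw [ZMod.val_cast_of_lt (Finset.mem_range.mp ha)]

theorem dr_sum_substitution (n : ℕ) (a : Fin n → ℕ) (b : Fin n → ℤ)
    (hpos : ∀ i, 0 < a i) (hodd : ∀ i, Odd (a i))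
    (hcop : ∀ i j, i ≠ j → Nat.Coprime (a i) (a j))
    (hsum : ∑ i, b i * ∏ j ∈ Finset.univ.erase i, (a j : ℤ) = 1) :
    ∀ i, drSum (b i) (a i) (1/2) 0
      = drSum (∏ j ∈ Finset.univ.erase i, (a j : ℤ)) (a i) (1/2) (1/2) := by
  intro i
  have hp : 0 < a i := hpos i
  haveI : NeZero (a i) := ⟨hp.ne'⟩
  obtain ⟨m, hm⟩ := hodd i
  set q : ℤ := b i with hqdef
  set P : ℤ := ∏ j ∈ Finset.univ.erase i, (a j : ℤ) with hPdef
  -- P is odd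
  have hPodd : Odd P := by
    refine Finset.prod_induction _ Odd (fun _ _ => Odd.mul) odd_one ?_
    intro j _
    exact Int.odd_coe_nat (a j) |>.mpr (hodd j)
  obtain ⟨c, hc⟩ := hPodd
  -- a i divides 1 - q * P
  have hdvd : (a i : ℤ) ∣ 1 - q * P := by
    have h1 : 1 - q * P = ∑ j ∈ Finset.univ.erase i, b j * ∏ l ∈ Finset.univ.erase j, (a l : ℤ) := by
      rw [← hsum, ← Finset.add_sum_erase _ _ (Finset.mem_univ i)]
      ring
    rw [h1]
    refine Finset.dvd_sum fun j hj => ?_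
    have hij : i ≠ j := fun h => (Finset.mem_erase.mp hj).1 h.symm
    exact Dvd.dvd.mul_left
      (Finset.dvd_prod_of_mem _ (Finset.mem_erase.mpr ⟨hij, Finset.mem_univ i⟩)) _
  obtain ⟨k0, hk0⟩ := hdvd
  -- q is a unit mod a i
  have hunit : IsUnit ((q : ℤ) : ZMod (a i)) := by
    apply IsUnit.of_mul_eq_one ((P : ℤ) : ZMod (a i))
    have h2 : ((q * P : ℤ) : ZMod (a i)) = ((1 - (a i : ℤ) * k0 : ℤ) : ZMod (a i)) := by
      congr 1; linarith
    push_cast [ZMod.natCast_self] at h2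
    push_cast
    rw [h2]; ring
  have hbij : Function.Bijective
      (fun x : ZMod (a i) => ((q : ℤ) : ZMod (a i)) * x + (m : ZMod (a i))) := by
    rw [Finite.injective_iff_bijective.symm]
    intro x y hxy
    simp only [add_left_inj] at hxy
    exact hunit.mul_left_cancel hxy
  unfold drSum
  rw [sum_range_eq_sum_zmod, sum_range_eq_sum_zmod]
  apply Fintype.sum_bijective _ hbij
  intro x
  beta_reduce
  set w : ZMod (a i) := ((q : ℤ) : ZMod (a i)) * x + (m : ZMod (a i)) with hwdef
  -- congruence: w.val ≡ q * x.val + m  mod (a i)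
  have hcong : ∃ k : ℤ, (w.val : ℤ) = q * (x.val : ℤ) + m + k * (a i) := by
    have h3 : ((w.val : ℤ) : ZMod (a i)) = ((q * (x.val : ℤ) + m : ℤ) : ZMod (a i)) := by
      push_cast
      rw [ZMod.natCast_zmod_val, ZMod.natCast_zmod_val]
    have h4 := (ZMod.intCast_eq_intCast_iff _ _ _).mp h3
    obtain ⟨k, hk⟩ := (Int.modEq_iff_dvd.mp h4.symm)
    exact ⟨k, by linarith⟩
  obtain ⟨k, hk⟩ := hcong
  generalize hvv : x.val = vv at hk ⊢
  generalize hww : w.val = ww at hk ⊢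
  have hpR : ((a i : ℕ) : ℝ) = 2 * m + 1 := by exact_mod_cast congrArg (Nat.cast : ℕ → ℝ) hm
  have hPR : (P : ℝ) = 2 * c + 1 := by exact_mod_cast congrArg (Int.cast : ℤ → ℝ) hc
  have hqR : (q : ℝ) * P = 1 - (a i : ℝ) * k0 := by
    have := congrArg (Int.cast : ℤ → ℝ) hk0
    push_cast at this
    linarith
  have hkR : (ww : ℝ) = (q : ℝ) * vv + m + k * (a i) := by
    exact_mod_cast congrArg (Int.cast : ℤ → ℝ) hk
  have hmne : (2 * (m : ℝ) + 1) ≠ 0 := by positivity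
  have e1 : saw (((ww : ℝ) + 1/2) / (a i)) = saw ((q : ℝ) * ((vv : ℝ) + 0) / (a i) + 1/2) := by
    apply saw_congr k
    rw [hkR, hpR]
    field_simp
    ring
  have e2 : saw ((P : ℝ) * ((ww : ℝ) + 1/2) / (a i) + 1/2)
      = saw (((vv : ℝ) + 0) / (a i)) := by
    apply saw_congr (-k0 * (vv : ℤ) + P * k + c + 1)
    push_cast
    rw [hkR, hpR, hPR]
    have hqR' : (q : ℝ) * (2 * c + 1) = 1 - (2 * m + 1) * k0 := by
      rw [← hPR, ← hpR]; exact hqR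
    field_simp
    linear_combination (2 * (vv : ℝ)) * hqR'
  rw [e1, e2]
  ring
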